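/- arXiv:2507.02526 — 5 statements merged into one kernel-verified Lean document; each statement's English description precedes it below -/
import Mathlib

section
/- Suppose n ≥ 3 and (a_0,...,a_{n-2}) and (a_1,...,a_{n-1}) are both symmetric (n-1)-tuples over Z_k. Then either both tuples are uniform, or n is even and both tuples are alternating. -/
/-- If `n ≥ 3` and the `(n-1)`-tuples `(a 0, ..., a (n-2))` and `(a 1, ..., a (n-1))`
over `ZMod k` are both symmetric, then either both tuples are uniform, or `n` is even
and both tuples are alternating. -/
theorem consecutive_symmetric_tuples
    (n k : ℕ) (hn : 3 ≤ n) (hk : 2 ≤ k) (a : ℕ → ZMod k)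
    (hsymA : ∀ i, i ≤ n - 2 → a i = a (n - 2 - i))
    (hsymB : ∀ i, i ≤ n - 2 → a (1 + i) = a (1 + (n - 2 - i))) :
    ((∀ i j, i ≤ n - 2 → j ≤ n - 2 → a i = a j) ∧
     (∀ i j, i ≤ n - 2 → j ≤ n - 2 → a (1 + i) = a (1 + j))) ∨
    (Even n ∧
     ((¬ ∀ i j, i ≤ n - 2 → j ≤ n - 2 → a i = a j) ∧
       ∀ i j, i ≤ n - 2 → j ≤ n - 2 → i % 2 = j % 2 → a i = a j) ∧
     ((¬ ∀ i j, i ≤ n - 2 → j ≤ n - 2 → a (1 + i) = a (1 + j)) ∧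
       ∀ i j, i ≤ n - 2 → j ≤ n - 2 → i % 2 = j % 2 → a (1 + i) = a (1 + j))) := by
  set m := n - 2 with hm
  have hm1 : 1 ≤ m := by omega
  -- step lemma: a i = a (i + 2) within range
  have step : ∀ i, i + 2 ≤ m + 1 → a i = a (i + 2) := by
    intro i hi
    have h1 : a i = a (m - i) := hsymA i (by omega)
    have h2 : a (1 + (m - i - 1)) = a (1 + (m - (m - i - 1))) := hsymB _ (by omega)
    have e1 : 1 + (m - i - 1) = m - i := by omega
    have e2 : 1 + (m - (m - i - 1)) = i + 2 := by omega
    rw [e1, e2] at h2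
    rw [h1, h2]
  have steps : ∀ d i, i + 2 * d ≤ m + 1 → a i = a (i + 2 * d) := by
    intro d
    induction d with
    | zero => intro i _; norm_num
    | succ d ih =>
      intro i hi
      have h1 : a i = a (i + 2) := step i (by omega)
      have h2 : a (i + 2) = a (i + 2 + 2 * d) := ih (i + 2) (by omega)
      have e : i + 2 + 2 * d = i + 2 * (d + 1) := by ring
      rw [h1, h2, e]
  have same : ∀ i j, i ≤ m + 1 → j ≤ m + 1 → i % 2 = j % 2 → a i = a j := by
    have key : ∀ i j, i ≤ j → j ≤ m + 1 → i % 2 = j % 2 → a i = a j := by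
      intro i j hij hj hp
      obtain ⟨d, hd⟩ : ∃ d, j = i + 2 * d := ⟨(j - i) / 2, by omega⟩
      subst hd
      exact steps d i (by omega)
    intro i j hi hj hp
    rcases le_total i j with h | h
    · exact key i j h hj hp
    · exact (key j i h hi hp.symm).symm
  by_cases h01 : a 0 = a 1
  · left
    have all : ∀ i, i ≤ m + 1 → a i = a 0 := by
      intro i hi
      rcases Nat.even_or_odd i with he | ho
      · rw [Nat.even_iff] at he
        exact same i 0 hi (by omega) (by omega)
      · rw [Nat.odd_iff] at ho
        rw [same i 1 hi (by omega) (by omega), h01]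
    constructor
    · intro i j hi hj
      rw [all i (by omega), all j (by omega)]
    · intro i j hi hj
      rw [all (1 + i) (by omega), all (1 + j) (by omega)]
  · right
    have h0m : a 0 = a m := by
      have := hsymA 0 (by omega)
      simpa using this
    have hmeven : m % 2 = 0 := by
      by_contra hodd
      exact h01 (h0m.trans (same m 1 (by omega) (by omega) (by omega)))
    refine ⟨by rw [Nat.even_iff]; omega, ⟨?_, ?_⟩, ⟨?_, ?_⟩⟩
    · intro hall
      exact h01 (hall 0 1 (by omega) (by omega))
    · intro i j hi hj hp
      exact same i j (by omega) (by omega) hp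
    · intro hall
      have h12 : a (1 + 0) = a (1 + 1) := hall 0 1 (by omega) (by omega)
      have h20 : a 2 = a 0 := same 2 0 (by omega) (by omega) (by omega)
      simp only [Nat.add_zero] at h12
      exact h01 (by rw [← h20]; exact h12.symm)
    · intro i j hi hj hp
      exact same (1 + i) (1 + j) (by omega) (by omega) (by omega)
end

section
/- Suppose n ≥ 5, the (n-1)-tuple (a_0,...,a_{n-2}) over Z_k is symmetric, and the (n-1)-tuple (a_1,...,a_{n-1}) is right-semi-symmetric. Then the sequence a_0,...,a_{n-1} is periodic with period 3, i.e., a_i = a_{i+3} for all 0 ≤ i ≤ n-4. Moreover, writing c_j = a_j for j = 0,1,2: if n ≡ 0 (mod 3) then c_0 = c_1; if n ≡ 1 (mod 3) then c_0 = c_2; if n ≡ 2 (mod 3) then c_1 = c_2. -/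
/-- If `n ≥ 5`, the `(n-1)`-tuple `(a 0, ..., a (n-2))` over `ZMod k` is symmetric and
the `(n-1)`-tuple `(a 1, ..., a (n-1))` is right-semi-symmetric, then `a i = a (i+3)`
for `i ≤ n-4`, and: if `n ≡ 0 (mod 3)` then `a 0 = a 1`; if `n ≡ 1 (mod 3)` then
`a 0 = a 2`; if `n ≡ 2 (mod 3)` then `a 1 = a 2`. -/
theorem symmetric_and_right_semi_symmetric_period_three
    (n k : ℕ) (hn : 5 ≤ n) (hk : 2 ≤ k) (a : ℕ → ZMod k)
    (hsymA : ∀ i, i ≤ n - 2 → a i = a (n - 2 - i))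
    (hrightB : ∀ i, 1 ≤ i → i ≤ n - 2 → a (1 + i) = a (1 + (n - 1 - i))) :
    (∀ i, i ≤ n - 4 → a i = a (i + 3)) ∧
    (n % 3 = 0 → a 0 = a 1) ∧
    (n % 3 = 1 → a 0 = a 2) ∧
    (n % 3 = 2 → a 1 = a 2) := by
  have hper : ∀ i, i ≤ n - 4 → a i = a (i + 3) := by
    intro i hi
    have h1 := hsymA i (by omega)
    have h2 := hrightB (n - 3 - i) (by omega) (by omega)
    have e1 : 1 + (n - 3 - i) = n - 2 - i := by omega
    have e2 : 1 + (n - 1 - (n - 3 - i)) = i + 3 := by omega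
    rw [e1, e2] at h2
    exact h1.trans h2
  have hred : ∀ j, j ≤ n - 1 → a j = a (j % 3) := by
    intro j
    induction j using Nat.strong_induction_on with
    | _ j ih =>
      intro hj
      rcases Nat.lt_or_ge j 3 with h | h
      · rw [Nat.mod_eq_of_lt h]
      · have hp := hper (j - 3) (by omega)
        have e : j - 3 + 3 = j := by omega
        rw [e] at hp
        have := ih (j - 3) (by omega) (by omega)
        rw [← hp, this]
        congr 1
        omega
  refine ⟨hper, ?_, ?_, ?_⟩
  · intro h3
    have h1 := hsymA 0 (by omega)
    have h2 := hred (n - 2 - 0) (by omega)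
    have e : (n - 2 - 0) % 3 = 1 := by omega
    rw [e] at h2
    exact h1.trans h2
  · intro h3
    have h1 := hsymA 0 (by omega)
    have h2 := hred (n - 2 - 0) (by omega)
    have e : (n - 2 - 0) % 3 = 2 := by omega
    rw [e] at h2
    exact h1.trans h2
  · intro h3
    have h1 := hsymA 1 (by omega)
    have h2 := hred (n - 2 - 1) (by omega)
    have e : (n - 2 - 1) % 3 = 2 := by omega
    rw [e] at h2
    exact h1.trans h2
end

section
/- Suppose n ≥ 5, the (n-1)-tuple (a_0,...,a_{n-2}) over Z_k is left-semi-symmetric, and the (n-1)-tuple (a_1,...,a_{n-1}) is right-semi-symmetric. Then a_i = a_{i+4} for all 0 ≤ i ≤ n-5, and writing c_j = a_j for j = 0,1,2,3: if n ≡ 0 (mod 4) then c_0 = c_1 and c_2 = c_3; if n ≡ 1 (mod 4) then c_0 = c_2; if n ≡ 2 (mod 4) then c_0 = c_3 and c_1 = c_2; if n ≡ 3 (mod 4) then c_1 = c_3. -/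
/-- If `n ≥ 5`, the `(n-1)`-tuple `(a 0, ..., a (n-2))` over `ZMod k` is
left-semi-symmetric and the `(n-1)`-tuple `(a 1, ..., a (n-1))` is
right-semi-symmetric, then `a i = a (i+4)` for `i ≤ n-5`, and: if `n ≡ 0 (mod 4)`
then `a 0 = a 1` and `a 2 = a 3`; if `n ≡ 1 (mod 4)` then `a 0 = a 2`; if
`n ≡ 2 (mod 4)` then `a 0 = a 3` and `a 1 = a 2`; if `n ≡ 3 (mod 4)` then
`a 1 = a 3`. -/
theorem left_semi_and_right_semi_symmetric_period_four
    (n k : ℕ) (hn : 5 ≤ n) (hk : 2 ≤ k) (a : ℕ → ZMod k)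
    (hleftA : ∀ i, i ≤ n - 3 → a i = a (n - 3 - i))
    (hrightB : ∀ i, 1 ≤ i → i ≤ n - 2 → a (1 + i) = a (1 + (n - 1 - i))) :
    (∀ i, i ≤ n - 5 → a i = a (i + 4)) ∧
    (n % 4 = 0 → a 0 = a 1 ∧ a 2 = a 3) ∧
    (n % 4 = 1 → a 0 = a 2) ∧
    (n % 4 = 2 → a 0 = a 3 ∧ a 1 = a 2) ∧
    (n % 4 = 3 → a 1 = a 3) := by
  have hper : ∀ i, i ≤ n - 5 → a i = a (i + 4) := by
    intro i hi
    have h1 : a i = a (n - 3 - i) := hleftA i (by omega)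
    have h2 : a (1 + (n - 4 - i)) = a (1 + (n - 1 - (n - 4 - i))) :=
      hrightB (n - 4 - i) (by omega) (by omega)
    rw [show 1 + (n - 4 - i) = n - 3 - i by omega,
        show 1 + (n - 1 - (n - 4 - i)) = i + 4 by omega] at h2
    rw [h1, h2]
  have hred : ∀ j, j ≤ n - 1 → a j = a (j % 4) := by
    intro j
    induction j using Nat.strong_induction_on with
    | _ j ih =>
      intro hj
      by_cases h4 : j < 4
      · rw [Nat.mod_eq_of_lt h4]
      · have hstep : a (j - 4) = a j := by
          have := hper (j - 4) (by omega)
          rwa [show j - 4 + 4 = j by omega] at this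
        rw [← hstep, ih (j - 4) (by omega) (by omega),
            show (j - 4) % 4 = j % 4 by omega]
  refine ⟨hper, ?_, ?_, ?_, ?_⟩
  · intro h
    have h1 : a 0 = a (n - 3) := hleftA 0 (by omega)
    have h2 : a 2 = a (n - 5) := hleftA 2 (by omega)
    exact ⟨by rw [h1, hred (n - 3) (by omega), show (n - 3) % 4 = 1 by omega],
      by rw [h2, hred (n - 5) (by omega), show (n - 5) % 4 = 3 by omega]⟩
  · intro h
    have h1 : a 0 = a (n - 3) := hleftA 0 (by omega)
    rw [h1, hred (n - 3) (by omega), show (n - 3) % 4 = 2 by omega]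
  · intro h
    have h1 : a 0 = a (n - 3) := hleftA 0 (by omega)
    have h2 : a 1 = a (n - 4) := hleftA 1 (by omega)
    exact ⟨by rw [h1, hred (n - 3) (by omega), show (n - 3) % 4 = 3 by omega],
      by rw [h2, hred (n - 4) (by omega), show (n - 4) % 4 = 2 by omega]⟩
  · intro h
    have h2 : a 1 = a (n - 4) := hleftA 1 (by omega)
    rw [h2, hred (n - 4) (by omega), show (n - 4) % 4 = 3 by omega]
end

section
/- For n ≥ 3 and k ≥ 2, the number of k-ary n-tuples that are left-semi-symmetric, non-uniform, and non-alternating is k^{(n+2)/2} - k^2 if n is even, and k^{(n+1)/2} - k if n is odd. -/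
private lemma aux_semi_card (n k : ℕ) (hn : 3 ≤ n) [NeZero k] :
    Nat.card {a : Fin n → ZMod k //
      ∀ i j : Fin n, (i : ℕ) + (j : ℕ) = n - 2 → a i = a j} = k ^ (n / 2 + 1) := by
  have e : {a : Fin n → ZMod k //
      ∀ i j : Fin n, (i : ℕ) + (j : ℕ) = n - 2 → a i = a j} ≃ (Fin (n / 2 + 1) → ZMod k) :=
    { toFun := fun a j => if h : (j : ℕ) < n / 2 then a.1 ⟨j, by omega⟩
        else a.1 ⟨n - 1, by omega⟩
      invFun := fun b => ⟨fun i => if (i : ℕ) = n - 1 then b ⟨n / 2, by omega⟩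
        else b ⟨min (i : ℕ) (n - 2 - (i : ℕ)), by omega⟩, by
          intro i j hij
          have hi : (i : ℕ) ≤ n - 2 := by omega
          have hj : (j : ℕ) ≤ n - 2 := by omega
          have h1 : ¬ ((i : ℕ) = n - 1) := by omega
          have h2 : ¬ ((j : ℕ) = n - 1) := by omega
          have h3 : min (i : ℕ) (n - 2 - (i : ℕ)) = min (j : ℕ) (n - 2 - (j : ℕ)) := by
            omega
          simp only [h1, h2, if_false]
          congr 1
          exact Fin.ext h3⟩
      left_inv := by
        rintro ⟨a, ha⟩
        apply Subtype.ext
        funext i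
        simp only
        by_cases h : (i : ℕ) = n - 1
        · rw [if_pos h]
          rw [dif_neg (by omega)]
          congr 1
          exact Fin.ext h.symm
        · rw [if_neg h]
          have hi : (i : ℕ) ≤ n - 2 := by omega
          have hlt : min (i : ℕ) (n - 2 - (i : ℕ)) < n / 2 := by omega
          rw [dif_pos hlt]
          by_cases hle : (i : ℕ) ≤ n - 2 - (i : ℕ)
          · have : min (i : ℕ) (n - 2 - (i : ℕ)) = (i : ℕ) := by omega
            congr 1
            exact Fin.ext this
          · have hmin : min (i : ℕ) (n - 2 - (i : ℕ)) = n - 2 - (i : ℕ) := by omega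
            exact ha ⟨min (i : ℕ) (n - 2 - (i : ℕ)), by omega⟩ i (by
              simp only [hmin]; omega)
      right_inv := by
        intro b
        funext j
        simp only
        by_cases h : (j : ℕ) < n / 2
        · rw [dif_pos h, if_neg (by omega)]
          have : min ((j : ℕ)) (n - 2 - (j : ℕ)) = (j : ℕ) := by omega
          congr 1
          exact Fin.ext this
        · rw [dif_neg h]
          rw [if_pos (by simp)]
          congr 1
          apply Fin.ext
          simp
          omega }
  rw [Nat.card_congr e]
  simp [Nat.card_eq_fintype_card, ZMod.card]

private lemma aux_par_card_even (n k : ℕ) (hn : 3 ≤ n) (hn2 : n % 2 = 0) [NeZero k] :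
    Nat.card {a : Fin n → ZMod k //
      (∀ i j : Fin n, (i : ℕ) + (j : ℕ) = n - 2 → a i = a j) ∧
      (∀ i j : Fin n, (i : ℕ) % 2 = (j : ℕ) % 2 → a i = a j)} = k ^ 2 := by
  have e : {a : Fin n → ZMod k //
      (∀ i j : Fin n, (i : ℕ) + (j : ℕ) = n - 2 → a i = a j) ∧
      (∀ i j : Fin n, (i : ℕ) % 2 = (j : ℕ) % 2 → a i = a j)} ≃ (ZMod k × ZMod k) :=
    { toFun := fun a => (a.1 ⟨0, by omega⟩, a.1 ⟨1, by omega⟩)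
      invFun := fun p => ⟨fun i => if (i : ℕ) % 2 = 0 then p.1 else p.2, by
        constructor
        · intro i j hij
          have : (i : ℕ) % 2 = (j : ℕ) % 2 := by omega
          simp only [this]
        · intro i j hij
          simp only [hij]⟩
      left_inv := by
        rintro ⟨a, ha, hp⟩
        apply Subtype.ext
        funext i
        simp only
        by_cases h : (i : ℕ) % 2 = 0
        · rw [if_pos h]
          exact hp ⟨0, by omega⟩ i (by simpa using h.symm)
        · rw [if_neg h]
          exact hp ⟨1, by omega⟩ i (by simp; omega)
      right_inv := by
        intro p
        simp }
  rw [Nat.card_congr e]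
  simp [Nat.card_eq_fintype_card, ZMod.card, sq]

private lemma aux_par_card_odd (n k : ℕ) (hn : 3 ≤ n) (hn2 : n % 2 = 1) [NeZero k] :
    Nat.card {a : Fin n → ZMod k //
      (∀ i j : Fin n, (i : ℕ) + (j : ℕ) = n - 2 → a i = a j) ∧
      (∀ i j : Fin n, (i : ℕ) % 2 = (j : ℕ) % 2 → a i = a j)} = k := by
  have e : {a : Fin n → ZMod k //
      (∀ i j : Fin n, (i : ℕ) + (j : ℕ) = n - 2 → a i = a j) ∧
      (∀ i j : Fin n, (i : ℕ) % 2 = (j : ℕ) % 2 → a i = a j)} ≃ ZMod k :=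
    { toFun := fun a => a.1 ⟨0, by omega⟩
      invFun := fun x => ⟨fun _ => x, fun _ _ _ => rfl, fun _ _ _ => rfl⟩
      left_inv := by
        rintro ⟨a, ha, hp⟩
        apply Subtype.ext
        funext i
        simp only
        by_cases h : (i : ℕ) % 2 = 0
        · exact hp ⟨0, by omega⟩ i (by simpa using h.symm)
        · have h1 : a ⟨0, by omega⟩ = a ⟨n - 2, by omega⟩ :=
            ha ⟨0, by omega⟩ ⟨n - 2, by omega⟩ (by simp)
          have h2 : a ⟨n - 2, by omega⟩ = a i :=
            hp ⟨n - 2, by omega⟩ i (by simp; omega)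
          exact h1.trans h2
      right_inv := fun x => rfl }
  rw [Nat.card_congr e]
  simp [Nat.card_eq_fintype_card, ZMod.card]

/-- For `n ≥ 3` and `k ≥ 2`, the number of `k`-ary `n`-tuples that are
left-semi-symmetric, non-uniform and non-alternating is `k^((n+2)/2) - k^2` if `n`
is even and `k^((n+1)/2) - k` if `n` is odd. -/
theorem card_left_semi_symmetric_nonuniform_nonalternating
    (n k : ℕ) (hn : 3 ≤ n) (hk : 2 ≤ k) :
    Nat.card {a : Fin n → ZMod k //
      (∀ i j : Fin n, (i : ℕ) + (j : ℕ) = n - 2 → a i = a j) ∧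
      (¬ ∀ i j : Fin n, a i = a j) ∧
      ¬ ((¬ ∀ i j : Fin n, a i = a j) ∧
         ∀ i j : Fin n, (i : ℕ) % 2 = (j : ℕ) % 2 → a i = a j)} =
    if Even n then k ^ ((n + 2) / 2) - k ^ 2 else k ^ ((n + 1) / 2) - k := by
  haveI : NeZero k := ⟨by omega⟩
  have heven : (n + 2) / 2 = n / 2 + 1 := by omega
  have hodd : ¬ Even n → (n + 1) / 2 = n / 2 + 1 := by
    intro h
    have := Nat.odd_iff.mp (Nat.not_even_iff_odd.mp h)
    omega
  set semi : (Fin n → ZMod k) → Prop :=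
    fun a => ∀ i j : Fin n, (i : ℕ) + (j : ℕ) = n - 2 → a i = a j with hsemi
  set par : (Fin n → ZMod k) → Prop :=
    fun a => ∀ i j : Fin n, (i : ℕ) % 2 = (j : ℕ) % 2 → a i = a j with hpar
  -- Step 1: simplify the predicate
  have step1 : Nat.card {a : Fin n → ZMod k //
      (∀ i j : Fin n, (i : ℕ) + (j : ℕ) = n - 2 → a i = a j) ∧
      (¬ ∀ i j : Fin n, a i = a j) ∧
      ¬ ((¬ ∀ i j : Fin n, a i = a j) ∧
         ∀ i j : Fin n, (i : ℕ) % 2 = (j : ℕ) % 2 → a i = a j)} =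
      Nat.card {a : Fin n → ZMod k // semi a ∧ ¬ par a} := by
    apply Nat.card_congr
    apply Equiv.subtypeEquivRight
    intro a
    have hUP : (∀ i j : Fin n, a i = a j) →
        (∀ i j : Fin n, (i : ℕ) % 2 = (j : ℕ) % 2 → a i = a j) :=
      fun h i j _ => h i j
    simp only [hsemi, hpar]
    tauto
  rw [step1]
  have hsemicard : Nat.card {a : Fin n → ZMod k // semi a} = k ^ (n / 2 + 1) := by
    rw [hsemi]; exact aux_semi_card n k hn
  have hparcard : Nat.card {a : Fin n → ZMod k // semi a ∧ par a} =
      if Even n then k ^ 2 else k := by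
    by_cases hev : Even n
    · rw [if_pos hev, hsemi, hpar]
      exact aux_par_card_even n k hn (Nat.even_iff.mp hev)
    · rw [if_neg hev, hsemi, hpar]
      exact aux_par_card_odd n k hn (Nat.odd_iff.mp (Nat.not_even_iff_odd.mp hev))
  -- set difference
  have hsub : {a : Fin n → ZMod k | semi a ∧ par a} ⊆ {a | semi a} :=
    fun a ha => ha.1
  have hdiff : {a : Fin n → ZMod k | semi a ∧ ¬ par a} =
      {a | semi a} \ {a | semi a ∧ par a} := by
    ext a
    simp only [Set.mem_setOf_eq, Set.mem_diff]
    tauto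
  have key : Nat.card {a : Fin n → ZMod k // semi a ∧ ¬ par a} =
      Nat.card {a : Fin n → ZMod k // semi a} -
        Nat.card {a : Fin n → ZMod k // semi a ∧ par a} := by
    have h1 : Nat.card {a : Fin n → ZMod k // semi a ∧ ¬ par a} =
        Set.ncard {a : Fin n → ZMod k | semi a ∧ ¬ par a} :=
      (Nat.card_coe_set_eq _)
    have h2 : Nat.card {a : Fin n → ZMod k // semi a} =
        Set.ncard {a : Fin n → ZMod k | semi a} :=
      (Nat.card_coe_set_eq _)
    have h3 : Nat.card {a : Fin n → ZMod k // semi a ∧ par a} =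
        Set.ncard {a : Fin n → ZMod k | semi a ∧ par a} :=
      (Nat.card_coe_set_eq _)
    rw [h1, h2, h3, hdiff]
    exact Set.ncard_diff hsub (Set.toFinite _)
  rw [key, hsemicard, hparcard]
  by_cases hev : Even n
  · rw [if_pos hev, if_pos hev, heven]
  · rw [if_neg hev, if_neg hev, hodd hev]
end

section
/- For n ≥ 2, k ≥ 3, and 1 ≤ t ≤ n/2, define the set A_k(n,t) of k-ary n-tuples (a_0,...,a_{n-1}) such that (a_{n-t} + ... + a_{n-1}) - (a_0 + ... + a_{t-1}) lies in {1, 2, ..., ⌊(k-1)/2⌋} (computed in Z_k). Then A_k(n,t) is antisymmetric: if a tuple s is in A_k(n,t), then its reverse s^R is not in A_k(n,t). -/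
/-- For `n ≥ 2`, `k ≥ 3` and `1 ≤ t ≤ n/2`, the set `A_k(n,t)` of `k`-ary `n`-tuples
with `(a_{n-t} + ... + a_{n-1}) - (a_0 + ... + a_{t-1}) ∈ {1, ..., ⌊(k-1)/2⌋}`
is antisymmetric: if `s ∈ A_k(n,t)` then its reverse is not in `A_k(n,t)`. -/
theorem Aknt_antisymmetric (n k t : ℕ) (hn : 2 ≤ n) (hk : 3 ≤ k)
    (ht1 : 1 ≤ t) (ht2 : t ≤ n / 2) (a : ℕ → ZMod k)
    (ha : 1 ≤ ((∑ i ∈ Finset.range t, a (n - t + i)) -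
               (∑ i ∈ Finset.range t, a i)).val ∧
          ((∑ i ∈ Finset.range t, a (n - t + i)) -
               (∑ i ∈ Finset.range t, a i)).val ≤ (k - 1) / 2) :
    ¬ (1 ≤ ((∑ i ∈ Finset.range t, (fun j => a (n - 1 - j)) (n - t + i)) -
            (∑ i ∈ Finset.range t, (fun j => a (n - 1 - j)) i)).val ∧
       ((∑ i ∈ Finset.range t, (fun j => a (n - 1 - j)) (n - t + i)) -
            (∑ i ∈ Finset.range t, (fun j => a (n - 1 - j)) i)).val ≤ (k - 1) / 2) := by
  haveI : NeZero k := ⟨by omega⟩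
  have htn : 2 * t ≤ n := by omega
  set D := (∑ i ∈ Finset.range t, a (n - t + i)) - (∑ i ∈ Finset.range t, a i) with hD
  have h1 : (∑ i ∈ Finset.range t, (fun j => a (n - 1 - j)) (n - t + i))
      = ∑ i ∈ Finset.range t, a i := by
    simp only
    have e : (∑ i ∈ Finset.range t, a (n - 1 - (n - t + i)))
        = ∑ i ∈ Finset.range t, a (t - 1 - i) :=
      Finset.sum_congr rfl (fun i hi => by
        simp only [Finset.mem_range] at hi; congr 1; omega)
    rw [e]; exact Finset.sum_range_reflect a t
  have h2 : (∑ i ∈ Finset.range t, (fun j => a (n - 1 - j)) i)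
      = ∑ i ∈ Finset.range t, a (n - t + i) := by
    simp only
    rw [← Finset.sum_range_reflect (fun i => a (n - t + i)) t]
    exact Finset.sum_congr rfl (fun i hi => by
      simp only [Finset.mem_range] at hi; congr 1; omega)
  rw [h1, h2]
  have hneg : (∑ i ∈ Finset.range t, a i) - (∑ i ∈ Finset.range t, a (n - t + i)) = -D := by
    rw [hD]; ring
  rw [hneg]
  have hD0 : D ≠ 0 := by
    intro h
    rw [h] at ha
    simp only [ZMod.val_zero] at ha
    omega
  have hval : (-D).val = k - D.val := by
    rw [ZMod.neg_val, if_neg hD0]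
  rw [hval]
  rintro ⟨_, h2'⟩
  have := ha.1
  have := ha.2
  have hvlt : D.val < k := ZMod.val_lt D
  omega
end
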